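/- Let Λ be a linear positive trace-preserving map such that Λ[ρ] is a pure state. Then for every unit vector |χ⟩ in the range of ρ, Λ[|χ⟩⟨χ|] = Λ[ρ]. -/

import Mathlib

open Matrix Kronecker BigOperators
open scoped ComplexOrder
open scoped MatrixOrder

/-- Trace distance/norm with factor 1/2: `‖A‖ = ½ tr √(AᴴA)`. -/
noncomputable def trNorm {m : Type*} [Fintype m] [DecidableEq m] (A : Matrix m m ℂ) : ℝ :=
  (1 / 2) * ((((Matrix.posSemidef_conjTranspose_mul_self A).1.eigenvectorUnitary : Matrix m m ℂ) *
      diagonal (((↑) : ℝ → ℂ) ∘ Real.sqrt ∘ (Matrix.posSemidef_conjTranspose_mul_self A).1.eigenvalues) *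
      star ((Matrix.posSemidef_conjTranspose_mul_self A).1.eigenvectorUnitary : Matrix m m ℂ)).trace).re

/-- A density operator: positive semidefinite with unit trace. -/
def IsDensity {m : Type*} [Fintype m] (ρ : Matrix m m ℂ) : Prop :=
  ρ.PosSemidef ∧ ρ.trace = 1

/-- A pure state: a density operator that is a (rank-one) projector. -/
def IsPureState {m : Type*} [Fintype m] (ρ : Matrix m m ℂ) : Prop :=
  IsDensity ρ ∧ ρ * ρ = ρ

/-- Completely positive trace-preserving map, via a Kraus representation. -/
def IsCPTP {m p : Type*} [Fintype m] [DecidableEq m] [Fintype p]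
    (Λ : Matrix m m ℂ →ₗ[ℂ] Matrix p p ℂ) : Prop :=
  ∃ (ι : Type) (s : Finset ι) (K : ι → Matrix p m ℂ),
    (∀ ρ, Λ ρ = ∑ i ∈ s, K i * ρ * (K i)ᴴ) ∧ ∑ i ∈ s, (K i)ᴴ * K i = 1

/-- Partial trace over the second (auxiliary) tensor factor. -/
noncomputable def ptraceB {m b : Type*} [Fintype b] (ρ : Matrix (m × b) (m × b) ℂ) :
    Matrix m m ℂ :=
  Matrix.of fun i j => ∑ k : b, ρ (i, k) (j, k)

/-- The projector `|χ⟩⟨χ|` onto the vector `χ`. -/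
noncomputable def pureProj {m : Type*} (χ : m → ℂ) : Matrix m m ℂ :=
  Matrix.vecMulVec χ (star χ)

/-- `χ` lies in the range of `ρ`. -/
def inRange {m : Type*} [Fintype m] (ρ : Matrix m m ℂ) (χ : m → ℂ) : Prop :=
  ∃ v, ρ *ᵥ v = χ

/-- Worst-case distinguishability: infimum of trace distances of pure states
taken from the ranges of `ρ` and `ρ'`. -/
noncomputable def wcd {m : Type*} [Fintype m] [DecidableEq m] (ρ ρ' : Matrix m m ℂ) : ℝ :=
  sInf { d : ℝ | ∃ χ χ' : m → ℂ, inRange ρ χ ∧ inRange ρ' χ' ∧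
    star χ ⬝ᵥ χ = 1 ∧ star χ' ⬝ᵥ χ' = 1 ∧ d = trNorm (pureProj χ - pureProj χ') }

set_option linter.unusedSectionVars false

namespace PA
variable {m : Type*} [Fintype m]

lemma vmv_mul {n p : Type*} [Fintype n] (a : m → ℂ) (b : n → ℂ) (M : Matrix n p ℂ) :
    vecMulVec a b * M = vecMulVec a (b ᵥ* M) := by
  ext i j
  simp [vecMulVec_apply, mul_apply, vecMul, dotProduct, Finset.mul_sum, mul_assoc]

lemma mul_vmv {n p : Type*} [Fintype n] (M : Matrix m n ℂ) (a : n → ℂ) (b : p → ℂ) :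
    M * vecMulVec a b = vecMulVec (M *ᵥ a) b := by
  ext i j
  simp [vecMulVec_apply, mul_apply, mulVec, dotProduct, Finset.sum_mul, mul_assoc]

lemma vmv_mul_vmv {n p : Type*} [Fintype n] (a : m → ℂ) (b c : n → ℂ) (d : p → ℂ) :
    vecMulVec a b * vecMulVec c d = (b ⬝ᵥ c) • vecMulVec a d := by
  ext i j
  simp only [mul_apply, vecMulVec_apply, Matrix.smul_apply, dotProduct, smul_eq_mul, Finset.sum_mul]
  exact Finset.sum_congr rfl fun k _ => by ring

lemma trace_vmv (a b : m → ℂ) : (vecMulVec a b).trace = a ⬝ᵥ b := by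
  simp [trace, diag, vecMulVec_apply, dotProduct]

lemma vmv_conjT (a : m → ℂ) : (vecMulVec a (star a))ᴴ = vecMulVec a (star a) := by
  ext i j
  simp [conjTranspose_apply, vecMulVec_apply, mul_comm]

lemma trace_ctm (S : Matrix m m ℂ) :
    (Sᴴ * S).trace = ∑ i, ∑ j, star (S j i) * S j i := by
  simp [trace, diag, mul_apply, conjTranspose_apply]

lemma psd_trace_nonneg {A : Matrix m m ℂ} (hA : A.PosSemidef) : 0 ≤ A.trace := by
  classical
  have h := CFC.sqrt_mul_sqrt_self A hA.nonneg
  have hS : (CFC.sqrt A)ᴴ = (CFC.sqrt A) := (CFC.sqrt_nonneg A).posSemidef.1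
  rw [← h]
  nth_rewrite 1 [← hS]
  rw [trace_ctm]
  exact Finset.sum_nonneg fun i _ => Finset.sum_nonneg fun j _ => star_mul_self_nonneg _

lemma psd_trace_zero {A : Matrix m m ℂ} (hA : A.PosSemidef) (h0 : A.trace = 0) : A = 0 := by
  classical
  have h := CFC.sqrt_mul_sqrt_self A hA.nonneg
  have hS : (CFC.sqrt A)ᴴ = (CFC.sqrt A) := (CFC.sqrt_nonneg A).posSemidef.1
  suffices hz : (CFC.sqrt A) = 0 by rw [← h, hz, Matrix.mul_zero]
  have htr : ∑ i, ∑ j, star ((CFC.sqrt A) j i) * (CFC.sqrt A) j i = 0 := by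
    rw [← trace_ctm, hS, h, h0]
  have hall := (Finset.sum_eq_zero_iff_of_nonneg (fun i _ =>
    Finset.sum_nonneg fun j _ => star_mul_self_nonneg _)).mp htr
  ext i j
  have h2 : star ((CFC.sqrt A) i j) * (CFC.sqrt A) i j = 0 :=
    (Finset.sum_eq_zero_iff_of_nonneg (fun j _ => star_mul_self_nonneg _)).mp
      (hall j (Finset.mem_univ _)) i (Finset.mem_univ _)
  simp only [mul_eq_zero, star_eq_zero, or_self] at h2
  simpa using h2

lemma psd_mul_eq_zero {A : Matrix m m ℂ} (hA : A.PosSemidef) (N : Matrix m m ℂ)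
    (h : Nᴴ * A * N = 0) : A * N = 0 := by
  classical
  have hs := CFC.sqrt_mul_sqrt_self A hA.nonneg
  have hS : (CFC.sqrt A)ᴴ = (CFC.sqrt A) := (CFC.sqrt_nonneg A).posSemidef.1
  have h1 : ((CFC.sqrt A) * N)ᴴ * ((CFC.sqrt A) * N) = 0 := by
    rw [conjTranspose_mul, hS, Matrix.mul_assoc, ← Matrix.mul_assoc (CFC.sqrt A), hs,
      ← Matrix.mul_assoc, h]
  have h2 : (CFC.sqrt A) * N = 0 := conjTranspose_mul_self_eq_zero.mp h1
  calc A * N = (CFC.sqrt A) * ((CFC.sqrt A) * N) := by rw [← Matrix.mul_assoc, hs]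
    _ = 0 := by rw [h2, Matrix.mul_zero]

/-- A hermitian idempotent of trace 1 acting as identity on a PSD matrix of trace 1 equals it. -/
lemma pure_extreme {Q A : Matrix m m ℂ} (hQpsd : Q.PosSemidef) (hQ2 : Q * Q = Q)
    (hQtr : Q.trace = 1) (hApsd : A.PosSemidef) (hAtr : A.trace = 1)
    (hQAQ : Q * A * Q = A) : A = Q := by
  classical
  -- find a unit eigenvector u of Q
  have hQne : Q ≠ 0 := fun h => by simp [h] at hQtr
  have hex : ∃ w₀, Q *ᵥ w₀ ≠ 0 := by
    by_contra h
    push_neg at h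
    apply hQne
    ext i j
    have := congr_fun (h (Pi.single j 1)) i
    simpa [mulVec_single] using this
  obtain ⟨w₀, hw₀⟩ := hex
  set u0 : m → ℂ := Q *ᵥ w₀ with hu0
  have hQu0 : Q *ᵥ u0 = u0 := by rw [hu0, mulVec_mulVec, hQ2]
  have hs : 0 < star u0 ⬝ᵥ u0 := dotProduct_star_self_pos_iff.mpr hw₀
  have hsim : (star u0 ⬝ᵥ u0).im = 0 := ((Complex.lt_def).mp hs).2.symm
  set r : ℝ := (star u0 ⬝ᵥ u0).re with hr
  have hrpos : 0 < r := ((Complex.lt_def).mp hs).1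
  have hsr : star u0 ⬝ᵥ u0 = (r : ℂ) := by
    apply Complex.ext <;> simp [hr, hsim]
  set c : ℂ := ((Real.sqrt r : ℝ) : ℂ) with hc
  have hcc : c * c = (r : ℂ) := by
    rw [hc]
    norm_cast
    exact Real.mul_self_sqrt hrpos.le
  have hcne : c ≠ 0 := by
    rw [hc]
    norm_cast
    exact (Real.sqrt_pos.mpr hrpos).ne'
  set u : m → ℂ := c⁻¹ • u0 with hu
  have hQu : Q *ᵥ u = u := by rw [hu, mulVec_smul, hQu0]
  have hstarc : star c = c := by rw [hc]; exact Complex.conj_ofReal _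
  have huu : star u ⬝ᵥ u = 1 := by
    rw [hu, star_smul, smul_dotProduct, dotProduct_smul, hsr, smul_eq_mul, smul_eq_mul,
      star_inv₀, hstarc, ← hcc]
    field_simp
  set U : Matrix m m ℂ := vecMulVec u (star u) with hU
  have hU2 : U * U = U := by rw [hU, vmv_mul_vmv, huu, one_smul]
  have hUtr : U.trace = 1 := by rw [hU, trace_vmv, dotProduct_comm]; exact huu
  have hQU : Q * U = U := by rw [hU, mul_vmv, hQu]
  have hsu : star u ᵥ* Q = star u := by
    have := star_mulVec Q u
    rw [hQu, hQpsd.1] at this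
    exact this.symm
  have hUQ : U * Q = U := by rw [hU, vmv_mul, hsu]
  -- R := Q - U is a PSD projector of trace 0, hence 0
  have hR2 : (Q - U) * (Q - U) = Q - U := by
    rw [Matrix.sub_mul, Matrix.mul_sub, Matrix.mul_sub, hQ2, hQU, hUQ, hU2]
    abel
  have hRH : (Q - U)ᴴ = Q - U := by
    rw [conjTranspose_sub, hQpsd.1, hU, vmv_conjT]
  have hRpsd : (Q - U).PosSemidef := by
    have : Q - U = (Q - U)ᴴ * (Q - U) := by rw [hRH, hR2]
    rw [this]
    exact posSemidef_conjTranspose_mul_self _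
  have hRtr : (Q - U).trace = 0 := by rw [trace_sub, hQtr, hUtr, sub_self]
  have hQU' : Q = U := sub_eq_zero.mp (psd_trace_zero hRpsd hRtr)
  -- now A = U A U = (u* A u) • U = U = Q
  have hUAU : U * A * U = (star u ⬝ᵥ (A *ᵥ u)) • U := by
    rw [hU, Matrix.mul_assoc, mul_vmv, vmv_mul_vmv]
  have hA2 : A = (star u ⬝ᵥ (A *ᵥ u)) • U := by
    conv_lhs => rw [← hQAQ, hQU']
    exact hUAU
  have hκ : (star u ⬝ᵥ (A *ᵥ u)) = 1 := by
    have := hAtr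
    rw [hA2, trace_smul, hUtr, smul_eq_mul, mul_one] at this
    exact this
  rw [hQU', hA2, hκ, one_smul]

end PA

/-- a positive trace-preserving linear map sending `ρ` to a pure state
sends every unit vector in the range of `ρ` to the same pure state. -/
theorem pure_output_constant_on_range {n m : Type*} [Fintype n] [Fintype m]
    (Λ : Matrix n n ℂ →ₗ[ℂ] Matrix m m ℂ)
    (hpos : ∀ A : Matrix n n ℂ, A.PosSemidef → (Λ A).PosSemidef)
    (htr : ∀ A : Matrix n n ℂ, (Λ A).trace = A.trace)
    (ρ : Matrix n n ℂ) (hρ : IsDensity ρ) (hpure : IsPureState (Λ ρ)) :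
    ∀ χ : n → ℂ, inRange ρ χ → star χ ⬝ᵥ χ = 1 → Λ (pureProj χ) = Λ ρ := by
  classical
  intro χ hrange hunit
  obtain ⟨v, hv⟩ := hrange
  obtain ⟨hρpsd, hρtr⟩ := hρ
  set B := (CFC.sqrt ρ) with hBdef
  have hBB : B * B = ρ := CFC.sqrt_mul_sqrt_self ρ hρpsd.nonneg
  have hBH : Bᴴ = B := (CFC.sqrt_nonneg ρ).posSemidef.1
  set w : n → ℂ := B *ᵥ v with hwdef
  have hχ : χ = B *ᵥ w := by rw [hwdef, mulVec_mulVec, hBB, hv]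
  have hw0 : w ≠ 0 := by
    intro h
    apply one_ne_zero (α := ℂ)
    rw [← hunit, hχ, h, mulVec_zero]
    simp
  have ht : 0 < star w ⬝ᵥ w := dotProduct_star_self_pos_iff.mpr hw0
  have htim : (star w ⬝ᵥ w).im = 0 := ((Complex.lt_def).mp ht).2.symm
  set r : ℝ := (star w ⬝ᵥ w).re with hrdef
  have hrpos : 0 < r := ((Complex.lt_def).mp ht).1
  have htr' : star w ⬝ᵥ w = (r : ℂ) := by apply Complex.ext <;> simp [hrdef, htim]
  set α : ℂ := ((r⁻¹ : ℝ) : ℂ) with hαdef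
  have hαpos : 0 < α := by
    rw [hαdef, Complex.lt_def]
    constructor
    · simpa using inv_pos.mpr hrpos
    · simp
  have hαne : α ≠ 0 := hαpos.ne'
  have hstarα : star α = α := Complex.conj_ofReal _
  set W : Matrix n n ℂ := vecMulVec w (star w) with hWdef
  have hWH : Wᴴ = W := PA.vmv_conjT w
  have hWW : W * W = (r : ℂ) • W := by rw [hWdef, PA.vmv_mul_vmv, htr']
  have hαr : α * α * (r : ℂ) = α := by
    rw [hαdef]
    norm_cast
    field_simp
  -- middle matrix M = 1 - α • W is PSD
  have h1 : (α • W) * (α • W) = α • W := by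
    rw [smul_mul_smul_comm, hWW, smul_smul, hαr]
  have hMM : (1 - α • W) * (1 - α • W) = 1 - α • W := by
    simp only [Matrix.sub_mul, Matrix.mul_sub, Matrix.one_mul, Matrix.mul_one, h1]
    abel
  have hMH : (1 - α • W)ᴴ = 1 - α • W := by
    rw [conjTranspose_sub, conjTranspose_smul, hWH, conjTranspose_one, hstarα]
  have hMpsd : (1 - α • W).PosSemidef := by
    have : (1 - α • W) = (1 - α • W)ᴴ * (1 - α • W) := by rw [hMH, hMM]
    rw [this]
    exact posSemidef_conjTranspose_mul_self _
  -- ρ - α • pureProj χ = B * M * Bᴴ is PSD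
  have hP : pureProj χ = B * W * B := by
    rw [pureProj, hχ, star_mulVec, hBH, hWdef]
    rw [Matrix.mul_assoc, PA.vmv_mul, PA.mul_vmv]
  have hdecomp : ρ - α • pureProj χ = B * (1 - α • W) * Bᴴ := by
    rw [hBH, hP, Matrix.mul_sub, Matrix.sub_mul, Matrix.mul_one, hBB]
    rw [Matrix.mul_smul, Matrix.smul_mul]
  have hρP : (ρ - α • pureProj χ).PosSemidef := by
    rw [hdecomp]
    exact hMpsd.mul_mul_conjTranspose_same B
  -- pureProj χ is a density matrix
  have hPH : (pureProj χ)ᴴ = pureProj χ := PA.vmv_conjT χ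
  have hPP : pureProj χ * pureProj χ = pureProj χ := by
    rw [pureProj, PA.vmv_mul_vmv, hunit, one_smul]
  have hPpsd : (pureProj χ).PosSemidef := by
    have : pureProj χ = (pureProj χ)ᴴ * pureProj χ := by rw [hPH, hPP]
    rw [this]
    exact posSemidef_conjTranspose_mul_self _
  have hPtr : (pureProj χ).trace = 1 := by
    rw [pureProj, PA.trace_vmv, dotProduct_comm]; exact hunit
  -- image side
  set A := Λ (pureProj χ) with hAdef
  set Q := Λ ρ with hQdef
  have hApsd : A.PosSemidef := hpos _ hPpsd
  have hAtr : A.trace = 1 := by rw [hAdef, htr, hPtr]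
  have hQpsd : Q.PosSemidef := hpure.1.1
  have hQtr : Q.trace = 1 := hpure.1.2
  have hQ2 : Q * Q = Q := hpure.2
  have hDpsd : (Q - α • A).PosSemidef := by
    have := hpos _ hρP
    rwa [map_sub, LinearMap.map_smul] at this
  -- congruence by N = 1 - Q kills A outside the range of Q
  set N : Matrix m m ℂ := 1 - Q with hNdef
  have hNH : Nᴴ = N := by rw [hNdef, conjTranspose_sub, conjTranspose_one, hQpsd.1]
  have hNQ : N * Q = 0 := by rw [hNdef, Matrix.sub_mul, Matrix.one_mul, hQ2, sub_self]
  have hX : Nᴴ * (Q - α • A) * N = -(α • (Nᴴ * A * N)) := by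
    rw [hNH]
    simp only [Matrix.mul_sub, Matrix.sub_mul, hNQ, Matrix.zero_mul, Matrix.mul_smul,
      Matrix.smul_mul, zero_sub]
    rw [Matrix.neg_mul, Matrix.smul_mul]
  have hXpsd : (Nᴴ * (Q - α • A) * N).PosSemidef := hDpsd.conjTranspose_mul_mul_same N
  have hYpsd : (Nᴴ * A * N).PosSemidef := hApsd.conjTranspose_mul_mul_same N
  have hYtr0 : (Nᴴ * A * N).trace = 0 := by
    have h1 : 0 ≤ (Nᴴ * (Q - α • A) * N).trace := PA.psd_trace_nonneg hXpsd
    have h2 : 0 ≤ (Nᴴ * A * N).trace := PA.psd_trace_nonneg hYpsd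
    rw [hX, trace_neg, trace_smul, smul_eq_mul] at h1
    have h3 : α * (Nᴴ * A * N).trace ≤ 0 := neg_nonneg.mp h1
    have h4 : 0 ≤ α * (Nᴴ * A * N).trace := mul_nonneg hαpos.le h2
    have h5 : α * (Nᴴ * A * N).trace = 0 := le_antisymm h3 h4
    rcases mul_eq_zero.mp h5 with h | h
    · exact absurd h hαne
    · exact h
  have hY0 : Nᴴ * A * N = 0 := PA.psd_trace_zero hYpsd hYtr0
  have hAN : A * N = 0 := PA.psd_mul_eq_zero hApsd N hY0
  have hAQ : A * Q = A := by
    have : A * (1 - Q) = 0 := hAN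
    rw [Matrix.mul_sub, Matrix.mul_one, sub_eq_zero] at this
    exact this.symm
  have hQA : Q * A = A := by
    have := congrArg conjTranspose hAQ
    rwa [conjTranspose_mul, hQpsd.1, hApsd.1] at this
  have hQAQ : Q * A * Q = A := by rw [hQA, hAQ]
  have := PA.pure_extreme hQpsd hQ2 hQtr hApsd hAtr hQAQ
  rw [hAdef, hQdef] at this
  exact this
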